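/- Let n ≥ 2, W ∈ ℝⁿ, and fix K with 0 < K < n. Let S_top be a set of indices of K largest entries of W and S_bot a set of indices of K smallest entries of W (with respect to a fixed nonincreasing rearrangement). Then for every subset S ⊆ {1,…,n} with |S| = K, D(S) ≤ max( D(S_top), D(S_bot) ). That is, for a given K, the objective D is maximized at a mask selecting either the K largest weights or the K smallest weights of W. -/

import Mathlib

lemma sum_le_sum_top_aux {n : ℕ} (W : Fin n → ℝ) (S T : Finset (Fin n))
    (hcard : S.card = T.card)
    (h : ∀ i ∈ T, ∀ j ∉ T, W j ≤ W i) :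
    ∑ i ∈ S, W i ≤ ∑ i ∈ T, W i := by
  have hAB : (S \ T).card = (T \ S).card := by
    have h1 := Finset.card_sdiff_add_card_inter S T
    have h2 := Finset.card_sdiff_add_card_inter T S
    rw [Finset.inter_comm] at h2
    omega
  have hS : ∑ i ∈ S, W i = ∑ i ∈ S \ T, W i + ∑ i ∈ S ∩ T, W i := by
    rw [← Finset.sum_sdiff (Finset.inter_subset_left (s₂ := T)), Finset.sdiff_inter_self_left]
  have hT : ∑ i ∈ T, W i = ∑ i ∈ T \ S, W i + ∑ i ∈ T ∩ S, W i := by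
    rw [← Finset.sum_sdiff (Finset.inter_subset_left (s₂ := S)), Finset.sdiff_inter_self_left]
  rw [hS, hT, Finset.inter_comm T S]
  have key : ∑ i ∈ S \ T, W i ≤ ∑ i ∈ T \ S, W i := by
    rcases Finset.eq_empty_or_nonempty (T \ S) with hB | hB
    · have : (S \ T) = ∅ := by
        rw [← Finset.card_eq_zero]
        rw [hAB, hB]
        simp
      rw [this, hB]
    · obtain ⟨i₀, hi₀, hmin⟩ := Finset.exists_min_image (T \ S) W hB
      have hi₀T : i₀ ∈ T := (Finset.mem_sdiff.mp hi₀).1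
      have h1 : ∑ i ∈ S \ T, W i ≤ (S \ T).card • W i₀ := by
        apply Finset.sum_le_card_nsmul
        intro j hj
        exact h i₀ hi₀T j (Finset.mem_sdiff.mp hj).2
      have h2 : (T \ S).card • W i₀ ≤ ∑ i ∈ T \ S, W i :=
        Finset.card_nsmul_le_sum _ _ _ hmin
      rw [hAB] at h1
      linarith
  linarith

lemma quad_le_max_aux (kp mp a b s T : ℝ) (hk : 0 < kp) (hm : 0 < mp)
    (ha : a ≤ s) (hb : s ≤ b) :
    s ^ 2 / kp + (T - s) ^ 2 / mp ≤
      max (a ^ 2 / kp + (T - a) ^ 2 / mp) (b ^ 2 / kp + (T - b) ^ 2 / mp) := by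
  have hrw : ∀ x : ℝ, x ^ 2 / kp + (T - x) ^ 2 / mp
      = (mp * x ^ 2 + kp * (T - x) ^ 2) / (kp * mp) := by
    intro x; field_simp
  by_cases hc : (mp + kp) * (s + a) ≤ 2 * kp * T
  · refine le_trans ?_ (le_max_left _ _)
    rw [hrw s, hrw a]
    apply div_le_div_of_nonneg_right ?_ (by positivity)
    nlinarith [mul_nonneg (sub_nonneg.2 ha) (sub_nonneg.2 hc)]
  · refine le_trans ?_ (le_max_right _ _)
    push_neg at hc
    rw [hrw s, hrw b]
    apply div_le_div_of_nonneg_right ?_ (by positivity)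
    have hc' : 2 * kp * T ≤ (mp + kp) * (s + b) := by nlinarith
    nlinarith [mul_nonneg (sub_nonneg.2 hb) (sub_nonneg.2 hc')]

/-- For a fixed `K` with `0 < K < n`, the objective
`D(S) = (∑_{i∈S} W_i)²/K + (∑_{i∉S} W_i)²/(n−K)` over size-`K` masks is
maximized at a mask selecting either the `K` largest weights (`Stop`) or the
`K` smallest weights (`Sbot`) of `W`. -/
theorem dabnet_objective_max_at_extremes (n : ℕ) (hn : 2 ≤ n) (W : Fin n → ℝ)
    (K : ℕ) (hK0 : 0 < K) (hKn : K < n)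
    (Stop Sbot : Finset (Fin n))
    (htopcard : Stop.card = K) (hbotcard : Sbot.card = K)
    (htop : ∀ i ∈ Stop, ∀ j ∉ Stop, W j ≤ W i)
    (hbot : ∀ i ∈ Sbot, ∀ j ∉ Sbot, W i ≤ W j)
    (D : Finset (Fin n) → ℝ)
    (hD : ∀ S : Finset (Fin n),
      D S = (∑ i ∈ S, W i) ^ 2 / (S.card : ℝ)
            + (∑ i ∈ Sᶜ, W i) ^ 2 / ((n : ℝ) - (S.card : ℝ))) :
    ∀ S : Finset (Fin n), S.card = K → D S ≤ max (D Stop) (D Sbot) := by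
  intro S hScard
  set Tot : ℝ := ∑ i, W i with hTot
  have hcompl : ∀ A : Finset (Fin n), ∑ i ∈ Aᶜ, W i = Tot - ∑ i ∈ A, W i := by
    intro A
    have := Finset.sum_add_sum_compl A W
    linarith
  have hKpos : (0 : ℝ) < (K : ℝ) := by exact_mod_cast hK0
  have hMpos : (0 : ℝ) < (n : ℝ) - (K : ℝ) := by
    have : (K : ℝ) < (n : ℝ) := by exact_mod_cast hKn
    linarith
  have hle_top : ∑ i ∈ S, W i ≤ ∑ i ∈ Stop, W i := by
    apply sum_le_sum_top_aux W S Stop (by rw [hScard, htopcard]) htop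
  have hle_bot : ∑ i ∈ Sbot, W i ≤ ∑ i ∈ S, W i := by
    have := sum_le_sum_top_aux (fun i => -W i) S Sbot (by rw [hScard, hbotcard])
      (fun i hi j hj => neg_le_neg (hbot i hi j hj))
    simp only [Finset.sum_neg_distrib] at this
    linarith
  rw [hD S, hD Stop, hD Sbot, hcompl, hcompl, hcompl, hScard, htopcard, hbotcard]
  rw [max_comm]
  exact quad_le_max_aux _ _ _ _ _ _ hKpos hMpos hle_bot hle_top
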